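/- Under the combinatorial setup (sublattice S, partitions E⁰_S, E^>_S, E^*_S satisfying RV1, RV2), for any z ∈ Fⁿ and ε, R > 0, the smallest set of S containing the support of z equals the smallest set of S containing the support of α^ε(z), which equals the smallest set of S containing the support of β^R(α^ε(z)). -/

import Mathlib

open Classical

/-- `Z_i = ⋃ {S ∈ 𝒮 : i ∉ S}`. -/
def Zset (n : ℕ) (𝒮 : Set (Set (Fin n))) (i : Fin n) : Set (Fin n) :=
  ⋃₀ {S ∈ 𝒮 | i ∉ S}

/-- `α^ε_i(z) = z_i + ε ∑_{j ∉ Z_i} z_j`. -/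
noncomputable def alphaMap (F : Subfield ℝ) (n : ℕ) (𝒮 : Set (Set (Fin n))) (ε : F)
    (z : Fin n → F) : Fin n → F :=
  fun i => z i + ε * ∑ j ∈ Finset.univ.filter (fun j => j ∉ Zset n 𝒮 i), z j

/-- `P_i = ⋃ {S ∈ 𝒮 : i ∈ E^≥_S}` where `E^≥_S = Sᶜ ∪ E^>_S`. -/
def Pset (n : ℕ) (𝒮 : Set (Set (Fin n))) (Egt : Set (Fin n) → Set (Fin n)) (i : Fin n) :
    Set (Fin n) :=
  ⋃₀ {S ∈ 𝒮 | i ∈ Sᶜ ∪ Egt S}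

/-- `β^R_i(y) = y_i - R ∑_{j ∉ P_i, P_j ≠ P_i} y_j`. -/
noncomputable def betaMap (F : Subfield ℝ) (n : ℕ) (𝒮 : Set (Set (Fin n)))
    (Egt : Set (Fin n) → Set (Fin n)) (R : F) (y : Fin n → F) : Fin n → F :=
  fun i => y i - R * ∑ j ∈ Finset.univ.filter
    (fun j => j ∉ Pset n 𝒮 Egt i ∧ Pset n 𝒮 Egt j ≠ Pset n 𝒮 Egt i), y j

/-- `U⁺ = ⋃_{S ∈ 𝒮} F_{>0}^S · 0^{Sᶜ}`. -/
def Uset (F : Subfield ℝ) (n : ℕ) (𝒮 : Set (Set (Fin n))) : Set (Fin n → F) :=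
  {x | ∃ S ∈ 𝒮, (∀ i ∈ S, 0 < x i) ∧ ∀ i ∉ S, x i = 0}

/-- `V⁺ = ⋃_{S ∈ 𝒮} 0^{E⁰_S} · F_{>0}^{E^>_S} · F^{E^*_S}` (zero off `S`, strictly
positive on `E^>_S`, arbitrary on `E^*_S`). -/
def Vset (F : Subfield ℝ) (n : ℕ) (𝒮 : Set (Set (Fin n)))
    (Egt : Set (Fin n) → Set (Fin n)) : Set (Fin n → F) :=
  {x | ∃ S ∈ 𝒮, (∀ i ∉ S, x i = 0) ∧ ∀ i ∈ Egt S, 0 < x i}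

section Aux

variable {n : ℕ} {𝒮 : Set (Set (Fin n))}

lemma sUnion_mem' (hempty : ∅ ∈ 𝒮) (hcup : ∀ S₁ ∈ 𝒮, ∀ S₂ ∈ 𝒮, S₁ ∪ S₂ ∈ 𝒮) :
    ∀ T : Set (Set (Fin n)), T ⊆ 𝒮 → ⋃₀ T ∈ 𝒮 := by
  intro T
  refine Set.Finite.induction_on (motive := fun T _ => T ⊆ 𝒮 → ⋃₀ T ∈ 𝒮) T (Set.toFinite T)
    (fun _ => by simpa using hempty) ?_
  intro a s _ _ ih hT
  rw [Set.sUnion_insert]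
  exact hcup _ (hT (Set.mem_insert _ _)) _ (ih fun x hx => hT (Set.mem_insert_of_mem _ hx))

lemma sInter_mem' (huniv : Set.univ ∈ 𝒮) (hcap : ∀ S₁ ∈ 𝒮, ∀ S₂ ∈ 𝒮, S₁ ∩ S₂ ∈ 𝒮) :
    ∀ T : Set (Set (Fin n)), T ⊆ 𝒮 → ⋂₀ T ∈ 𝒮 := by
  intro T
  refine Set.Finite.induction_on (motive := fun T _ => T ⊆ 𝒮 → ⋂₀ T ∈ 𝒮) T (Set.toFinite T)
    (fun _ => by simpa using huniv) ?_
  intro a s _ _ ih hT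
  rw [Set.sInter_insert]
  exact hcap _ (hT (Set.mem_insert _ _)) _ (ih fun x hx => hT (Set.mem_insert_of_mem _ hx))

end Aux

section Main

variable {F : Subfield ℝ} {n : ℕ} {𝒮 : Set (Set (Fin n))}

lemma alpha_forward {ε : F} {z : Fin n → F} {S : Set (Fin n)} (hS : S ∈ 𝒮)
    (h : {i | z i ≠ 0} ⊆ S) : {i | alphaMap F n 𝒮 ε z i ≠ 0} ⊆ S := by
  intro i hi
  by_contra hiS
  refine hi ?_
  have hzi : z i = 0 := by
    by_contra h'; exact hiS (h h')
  have hsum : ∀ j ∈ Finset.univ.filter (fun j => j ∉ Zset n 𝒮 i), z j = 0 := by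
    intro j hj
    simp only [Finset.mem_filter, Finset.mem_univ, true_and] at hj
    by_contra h'
    exact hj ⟨S, ⟨hS, hiS⟩, h h'⟩
  show alphaMap F n 𝒮 ε z i = 0
  simp [alphaMap, hzi, Finset.sum_eq_zero hsum]

lemma alpha_backward (huniv : Set.univ ∈ 𝒮)
    (hcap : ∀ S₁ ∈ 𝒮, ∀ S₂ ∈ 𝒮, S₁ ∩ S₂ ∈ 𝒮)
    {ε : F} (hε : 0 < ε) {z : Fin n → F} {S : Set (Fin n)} (hS : S ∈ 𝒮)
    (h : {i | alphaMap F n 𝒮 ε z i ≠ 0} ⊆ S) : {i | z i ≠ 0} ⊆ S := by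
  classical
  set Sm : Fin n → Set (Fin n) := fun j => ⋂₀ {S' ∈ 𝒮 | j ∈ S'} with hSmdef
  have hSm_mem : ∀ j, Sm j ∈ 𝒮 := fun j => sInter_mem' huniv hcap _ (fun x hx => hx.1)
  have hSm_self : ∀ j, j ∈ Sm j := fun j S' hS' => hS'.2
  have hSm_min : ∀ j S', S' ∈ 𝒮 → j ∈ S' → Sm j ⊆ S' :=
    fun j S' h1 h2 => Set.sInter_subset_of_mem ⟨h1, h2⟩
  have hZ : ∀ i j : Fin n, j ∉ Zset n 𝒮 i ↔ i ∈ Sm j := by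
    intro i j
    constructor
    · intro hj S' hS'
      by_contra hiS
      exact hj ⟨S', ⟨hS'.1, hiS⟩, hS'.2⟩
    · rintro hi ⟨S', ⟨h1, h2⟩, h3⟩
      exact h2 (hi S' ⟨h1, h3⟩)
  by_contra hcon
  rw [Set.not_subset] at hcon
  obtain ⟨i₀, hi₀z, hi₀S⟩ := hcon
  set 𝒯 : Set (Set (Fin n)) := {T | ∃ j, z j ≠ 0 ∧ Sm j = T ∧ ¬ T ⊆ S} with h𝒯def
  have h𝒯ne : 𝒯.Nonempty :=
    ⟨Sm i₀, i₀, hi₀z, rfl, fun hsub => hi₀S (hsub (hSm_self i₀))⟩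
  obtain ⟨M, hM𝒯, hMmax⟩ : ∃ M ∈ 𝒯, ∀ T ∈ 𝒯, M ⊆ T → M = T := by
    obtain ⟨M, hM⟩ := Set.Finite.exists_maximal (Set.toFinite 𝒯) h𝒯ne
    exact ⟨M, hM.1, fun T hT hMT => le_antisymm hMT (hM.2 hT hMT)⟩
  obtain ⟨m, hmz, hmM, hMS⟩ := hM𝒯
  have hclass : ∀ j, z j ≠ 0 → M ⊆ Sm j → Sm j = M := by
    intro j h1 h3
    have h2 : ¬ Sm j ⊆ S := fun hsub => hMS (h3.trans hsub)
    exact (hMmax (Sm j) ⟨j, h1, rfl, h2⟩ h3).symm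
  set Cfin : Finset (Fin n) := Finset.univ.filter (fun j => z j ≠ 0 ∧ Sm j = M) with hCfindef
  have hnotS : ∀ i : Fin n, Sm i = M → i ∉ S := by
    intro i hiM hiS
    exact hMS (hiM ▸ hSm_min i S hS hiS)
  have hαzero : ∀ i : Fin n, i ∉ S → alphaMap F n 𝒮 ε z i = 0 := by
    intro i hiS
    by_contra hne
    exact hiS (h hne)
  have hsum : ∀ i : Fin n, z i ≠ 0 → Sm i = M →
      ∑ j ∈ Finset.univ.filter (fun j => j ∉ Zset n 𝒮 i), z j = ∑ j ∈ Cfin, z j := by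
    intro i hiz hiM
    refine (Finset.sum_subset ?_ ?_).symm
    · intro j hj
      simp only [hCfindef, Finset.mem_filter, Finset.mem_univ, true_and] at hj ⊢
      refine (hZ i j).mpr ?_
      rw [hj.2, ← hiM]
      exact hSm_self i
    · intro j hj1 hj2
      simp only [hCfindef, Finset.mem_filter, Finset.mem_univ, true_and] at hj1 hj2
      by_contra hzj
      have h1 : i ∈ Sm j := (hZ i j).mp hj1
      have h2 : M ⊆ Sm j := hiM ▸ hSm_min i (Sm j) (hSm_mem j) h1
      exact hj2 ⟨hzj, hclass j hzj h2⟩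
  have hkey : ∀ i ∈ Cfin, z i = -(ε * ∑ j ∈ Cfin, z j) := by
    intro i hi
    simp only [hCfindef, Finset.mem_filter, Finset.mem_univ, true_and] at hi
    have h0 := hαzero i (hnotS i hi.2)
    rw [show alphaMap F n 𝒮 ε z i
        = z i + ε * ∑ j ∈ Finset.univ.filter (fun j => j ∉ Zset n 𝒮 i), z j from rfl,
      hsum i hi.1 hi.2] at h0
    linarith
  have hcard : (∑ j ∈ Cfin, z j) = (Cfin.card : F) * (-(ε * ∑ j ∈ Cfin, z j)) := by
    conv_lhs => rw [Finset.sum_congr rfl hkey]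
    rw [Finset.sum_const, nsmul_eq_mul]
  have hpos : (0:F) < 1 + (Cfin.card : F) * ε := by
    have h2 : (0:F) ≤ (Cfin.card : F) * ε := mul_nonneg (Nat.cast_nonneg _) hε.le
    linarith
  have hσ0 : (∑ j ∈ Cfin, z j) = 0 := by
    have h1 : (∑ j ∈ Cfin, z j) * (1 + (Cfin.card : F) * ε) = 0 := by
      linear_combination hcard
    rcases mul_eq_zero.mp h1 with h2 | h2
    · exact h2
    · exact absurd h2 hpos.ne'
  have hm' : m ∈ Cfin := Finset.mem_filter.mpr ⟨Finset.mem_univ m, hmz, hmM⟩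
  have hz0 := hkey m hm'
  rw [hσ0, mul_zero, neg_zero] at hz0
  exact hmz hz0

lemma beta_forward {Egt : Set (Fin n) → Set (Fin n)} {R : F} {y : Fin n → F}
    {S : Set (Fin n)} (hS : S ∈ 𝒮)
    (h : {i | y i ≠ 0} ⊆ S) : {i | betaMap F n 𝒮 Egt R y i ≠ 0} ⊆ S := by
  intro i hi
  by_contra hiS
  refine hi ?_
  have hSP : S ⊆ Pset n 𝒮 Egt i := Set.subset_sUnion_of_mem ⟨hS, Or.inl hiS⟩
  have hyi : y i = 0 := by
    by_contra h'; exact hiS (h h')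
  have hsum : ∀ j ∈ Finset.univ.filter
      (fun j => j ∉ Pset n 𝒮 Egt i ∧ Pset n 𝒮 Egt j ≠ Pset n 𝒮 Egt i), y j = 0 := by
    intro j hj
    simp only [Finset.mem_filter, Finset.mem_univ, true_and] at hj
    by_contra h'
    exact hj.1 (hSP (h h'))
  show betaMap F n 𝒮 Egt R y i = 0
  simp [betaMap, hyi, Finset.sum_eq_zero hsum]

lemma beta_backward (hempty : ∅ ∈ 𝒮)
    (hcup : ∀ S₁ ∈ 𝒮, ∀ S₂ ∈ 𝒮, S₁ ∪ S₂ ∈ 𝒮)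
    {Egt : Set (Fin n) → Set (Fin n)} {R : F} {y : Fin n → F}
    {S : Set (Fin n)} (hS : S ∈ 𝒮)
    (h : {i | betaMap F n 𝒮 Egt R y i ≠ 0} ⊆ S) : {i | y i ≠ 0} ⊆ S := by
  classical
  have hPmem : ∀ i, Pset n 𝒮 Egt i ∈ 𝒮 :=
    fun i => sUnion_mem' hempty hcup _ (fun x hx => hx.1)
  have hstep : ∀ (i : Fin n) (S' : Set (Fin n)), S' ∈ 𝒮 → i ∉ S' → S' ⊆ Pset n 𝒮 Egt i :=
    fun i S' h1 h2 => Set.subset_sUnion_of_mem ⟨h1, Or.inl h2⟩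
  have hle : ∀ s : Set (Fin n), s.ncard ≤ n := by
    intro s
    calc s.ncard ≤ (Set.univ : Set (Fin n)).ncard :=
          Set.ncard_le_ncard (Set.subset_univ _) (Set.toFinite _)
      _ = n := by rw [Set.ncard_univ, Nat.card_eq_fintype_card, Fintype.card_fin]
  have finish : ∀ i : Fin n,
      (∀ j, j ∉ Pset n 𝒮 Egt i → Pset n 𝒮 Egt j ≠ Pset n 𝒮 Egt i → y j ≠ 0 → j ∈ S) →
      y i ≠ 0 → i ∈ S := by
    intro i hj hyi
    by_contra hiS
    have hSP : S ⊆ Pset n 𝒮 Egt i := hstep i S hS hiS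
    have hsum : ∑ j ∈ Finset.univ.filter
        (fun j => j ∉ Pset n 𝒮 Egt i ∧ Pset n 𝒮 Egt j ≠ Pset n 𝒮 Egt i), y j = 0 := by
      refine Finset.sum_eq_zero ?_
      intro j hjf
      simp only [Finset.mem_filter, Finset.mem_univ, true_and] at hjf
      by_contra hyj
      exact hjf.1 (hSP (hj j hjf.1 hjf.2 hyj))
    have hne : betaMap F n 𝒮 Egt R y i ≠ 0 := by
      show y i - R * _ ≠ 0
      rw [hsum, mul_zero, sub_zero]
      exact hyi
    exact hiS (h hne)
  have main : ∀ (k : ℕ) (i : Fin n), n ≤ (Pset n 𝒮 Egt i).ncard + k → y i ≠ 0 → i ∈ S := by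
    intro k
    induction k with
    | zero =>
        intro i hk hyi
        refine finish i ?_ hyi
        intro j h1 h2 _
        exfalso
        have hss : Pset n 𝒮 Egt i ⊂ Pset n 𝒮 Egt j :=
          lt_of_le_of_ne (hstep j _ (hPmem i) h1) (Ne.symm h2)
        have := Set.ncard_lt_ncard hss (Set.toFinite _)
        have := hle (Pset n 𝒮 Egt j)
        omega
    | succ k ih =>
        intro i hk hyi
        refine finish i ?_ hyi
        intro j h1 h2 hyj
        have hss : Pset n 𝒮 Egt i ⊂ Pset n 𝒮 Egt j :=
          lt_of_le_of_ne (hstep j _ (hPmem i) h1) (Ne.symm h2)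
        have hlt := Set.ncard_lt_ncard hss (Set.toFinite _)
        exact ih j (by omega) hyj
  intro i hyi
  exact main n i (by omega) hyi

end Main


/-- Under the combinatorial setup (sublattice `𝒮`, partitions satisfying (RV1), (RV2)),
for any `z ∈ Fⁿ` and `ε, R > 0`, the smallest set of `𝒮` containing the support of `z`
(realized as the intersection of all members of `𝒮` containing the support) equals the
one for `α^ε(z)`, which equals the one for `β^R(α^ε(z))`. -/
theorem stmt11 (F : Subfield ℝ) (n : ℕ) (𝒮 : Set (Set (Fin n)))
    (hempty : ∅ ∈ 𝒮) (huniv : Set.univ ∈ 𝒮)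
    (hcup : ∀ S₁ ∈ 𝒮, ∀ S₂ ∈ 𝒮, S₁ ∪ S₂ ∈ 𝒮)
    (hcap : ∀ S₁ ∈ 𝒮, ∀ S₂ ∈ 𝒮, S₁ ∩ S₂ ∈ 𝒮)
    (Egt Estar : Set (Fin n) → Set (Fin n))
    (hpart : ∀ S ∈ 𝒮, Egt S ∩ Estar S = ∅ ∧ Egt S ∪ Estar S = S)
    (hRV1 : ∀ S₁ ∈ 𝒮, ∀ S₂ ∈ 𝒮,
      (S₁ ∪ S₂)ᶜ ∪ Egt (S₁ ∪ S₂) = (S₁ᶜ ∪ Egt S₁) ∩ (S₂ᶜ ∪ Egt S₂))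
    (hRV2 : ∀ S₁ ∈ 𝒮, ∀ S₂ ∈ 𝒮, ¬ S₂ ⊆ S₁ → (Egt S₂ \ S₁).Nonempty)
    (ε R : F) (hε : 0 < ε) (hR : 0 < R) (z : Fin n → F) :
    ⋂₀ {S ∈ 𝒮 | {i | z i ≠ 0} ⊆ S} =
      ⋂₀ {S ∈ 𝒮 | {i | alphaMap F n 𝒮 ε z i ≠ 0} ⊆ S} ∧
    ⋂₀ {S ∈ 𝒮 | {i | z i ≠ 0} ⊆ S} =
      ⋂₀ {S ∈ 𝒮 | {i | betaMap F n 𝒮 Egt R (alphaMap F n 𝒮 ε z) i ≠ 0} ⊆ S} := by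
  have hα : ∀ S ∈ 𝒮, ({i | z i ≠ 0} ⊆ S ↔ {i | alphaMap F n 𝒮 ε z i ≠ 0} ⊆ S) :=
    fun S hS => ⟨fun h => alpha_forward hS h, fun h => alpha_backward huniv hcap hε hS h⟩
  have hβ : ∀ S ∈ 𝒮, ({i | alphaMap F n 𝒮 ε z i ≠ 0} ⊆ S ↔
      {i | betaMap F n 𝒮 Egt R (alphaMap F n 𝒮 ε z) i ≠ 0} ⊆ S) :=
    fun S hS => ⟨fun h => beta_forward hS h, fun h => beta_backward hempty hcup hS h⟩
  have e1 : {S ∈ 𝒮 | {i | z i ≠ 0} ⊆ S} = {S ∈ 𝒮 | {i | alphaMap F n 𝒮 ε z i ≠ 0} ⊆ S} :=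
    Set.ext fun S => and_congr_right fun hS => hα S hS
  have e2 : {S ∈ 𝒮 | {i | z i ≠ 0} ⊆ S} =
      {S ∈ 𝒮 | {i | betaMap F n 𝒮 Egt R (alphaMap F n 𝒮 ε z) i ≠ 0} ⊆ S} :=
    Set.ext fun S => and_congr_right fun hS => (hα S hS).trans (hβ S hS)
  exact ⟨by rw [e1], by rw [e2]⟩
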